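/- arXiv:2012.12357 — 4 statements merged into one kernel-verified Lean document; each statement's English description precedes it below -/
import Mathlib

section
/- Let n be a positive integer and let u be a classical solution of (CH_n) on [0,T). Then the quantity H₁(t) := ∫_ℝ u(t,x) dx is constant on [0,T); that is, ∫_ℝ u(t,x) dx = ∫_ℝ u(0,x) dx for all t ∈ [0,T). -/
open Real MeasureTheory Filter Topology
open scoped ENNReal

/-- The Green function `g(x) = e^{-|x|}/2` of `1 - ∂ₓ²` on `ℝ`. -/
noncomputable def g (x : ℝ) : ℝ := Real.exp (-|x|) / 2

/-- `u_x`. -/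
noncomputable def ux (u : ℝ → ℝ → ℝ) (t x : ℝ) : ℝ := deriv (u t) x
/-- `u_{xx}`. -/
noncomputable def uxx (u : ℝ → ℝ → ℝ) (t x : ℝ) : ℝ := deriv (deriv (u t)) x
/-- `u_{xxx}`. -/
noncomputable def uxxx (u : ℝ → ℝ → ℝ) (t x : ℝ) : ℝ := deriv (deriv (deriv (u t))) x
/-- `u_t`. -/
noncomputable def ut (u : ℝ → ℝ → ℝ) (t x : ℝ) : ℝ := deriv (fun s => u s x) t
/-- `u_{tx}`. -/
noncomputable def utx (u : ℝ → ℝ → ℝ) (t x : ℝ) : ℝ := deriv (fun s => ux u s x) t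
/-- `u_{txx}`. -/
noncomputable def utxx (u : ℝ → ℝ → ℝ) (t x : ℝ) : ℝ := deriv (fun s => uxx u s x) t

/-- `f_t(x) = (n/2) u^{n-1} u_x² + (n(n+3)/(2(n+1))) u^{n+1}`. -/
noncomputable def fLoc (n : ℕ) (u : ℝ → ℝ → ℝ) (t x : ℝ) : ℝ :=
  ((n : ℝ) / 2) * u t x ^ (n - 1) * ux u t x ^ 2
    + ((n : ℝ) * ((n : ℝ) + 3) / (2 * ((n : ℝ) + 1))) * u t x ^ (n + 1)

/-- `F_t(x) = ∂ₓ (g ∗ f_t)(x)`. -/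
noncomputable def FLoc (n : ℕ) (u : ℝ → ℝ → ℝ) (t x : ℝ) : ℝ :=
  deriv (fun z => ∫ y : ℝ, g (z - y) * fLoc n u t y) x

/-- The equation (CH_n) holds pointwise at `(t,x)`. -/
def CHn (n : ℕ) (u : ℝ → ℝ → ℝ) (t x : ℝ) : Prop :=
  ut u t x - utxx u t x
      + (((n : ℝ) + 1) * ((n : ℝ) + 2) / 2) * u t x ^ n * ux u t x
    = ((n : ℝ) * ((n : ℝ) - 1) / 2) * u t x ^ (n - 2) * ux u t x ^ 3
      + 2 * (n : ℝ) * u t x ^ (n - 1) * ux u t x * uxx u t x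
      + u t x ^ n * uxxx u t x

/-- The time interval `[0, T)`, where `T ∈ (0, ∞]`. -/
def timeDomain (T : ℝ≥0∞) : Set ℝ := {t : ℝ | 0 ≤ t ∧ ENNReal.ofReal t < T}

/-- A function which is bounded, integrable, square-integrable and tends to `0` at `±∞`. -/
def Decays (w : ℝ → ℝ) : Prop :=
  (∃ C : ℝ, ∀ x : ℝ, |w x| ≤ C) ∧ Integrable w ∧
    Integrable (fun x => w x ^ 2) ∧ Tendsto w (cocompact ℝ) (𝓝 0)

/-- A classical solution of (CH_n) on `[0,T) × ℝ`. -/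
structure IsClassicalSolution (n : ℕ) (T : ℝ≥0∞) (u : ℝ → ℝ → ℝ) : Prop where
  contDiff_x : ∀ t ∈ timeDomain T, ContDiff ℝ 3 (u t)
  diff_t : ∀ x : ℝ, ∀ t ∈ timeDomain T, DifferentiableAt ℝ (fun s => u s x) t
  diff_tx : ∀ x : ℝ, ∀ t ∈ timeDomain T, DifferentiableAt ℝ (fun s => ux u s x) t
  diff_txx : ∀ x : ℝ, ∀ t ∈ timeDomain T, DifferentiableAt ℝ (fun s => uxx u s x) t
  cont_ut : ContinuousOn (fun p : ℝ × ℝ => ut u p.1 p.2) (timeDomain T ×ˢ Set.univ)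
  cont_utx : ContinuousOn (fun p : ℝ × ℝ => utx u p.1 p.2) (timeDomain T ×ˢ Set.univ)
  cont_utxx : ContinuousOn (fun p : ℝ × ℝ => utxx u p.1 p.2) (timeDomain T ×ˢ Set.univ)
  pde : ∀ t ∈ timeDomain T, ∀ x : ℝ, CHn n u t x
  nonlocal : ∀ t ∈ timeDomain T, ∀ x : ℝ,
    ut u t x + u t x ^ n * ux u t x + FLoc n u t x = 0
  decay_u : ∀ t ∈ timeDomain T, Decays (u t)
  decay_ux : ∀ t ∈ timeDomain T, Decays (ux u t)
  decay_uxx : ∀ t ∈ timeDomain T, Decays (uxx u t)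
  decay_ut : ∀ t ∈ timeDomain T, Decays (ut u t)
  sup_bound : ∀ T₀ ∈ timeDomain T, ∃ M : ℝ, ∀ t ∈ Set.Icc (0 : ℝ) T₀, ∀ x : ℝ,
    |u t x| + |ux u t x| ≤ M

section AuxCH
open Set

lemma g_cont : Continuous g := (Real.continuous_exp.comp continuous_abs.neg).div_const 2
lemma g_nonneg (x : ℝ) : 0 ≤ g x := div_nonneg (Real.exp_pos _).le two_pos.le
lemma g_le_half (x : ℝ) : g x ≤ 1/2 := by
  have h : Real.exp (-|x|) ≤ 1 := Real.exp_le_one_iff.2 (neg_nonpos.2 (abs_nonneg x))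
  unfold g; linarith
lemma abs_g_le (x : ℝ) : |g x| ≤ 1/2 := by rw [abs_of_nonneg (g_nonneg x)]; exact g_le_half x

lemma g_integrable : Integrable g := by
  rw [← integrableOn_univ, ← Set.Iic_union_Ioi (a := (0:ℝ))]
  apply IntegrableOn.union
  · have h1 : IntegrableOn (fun x => Real.exp x / 2) (Set.Iic (0:ℝ)) :=
      (integrableOn_exp_Iic 0).div_const 2
    exact h1.congr_fun (fun x hx => by
      simp only [g, abs_of_nonpos (mem_Iic.1 hx), neg_neg]) measurableSet_Iic
  · have h1 : IntegrableOn (fun x => Real.exp (-(1:ℝ) * x) / 2) (Set.Ioi (0:ℝ)) :=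
      (exp_neg_integrableOn_Ioi 0 one_pos).div_const 2
    exact h1.congr_fun (fun x hx => by
      have hx0 : (0:ℝ) ≤ x := le_of_lt (mem_Ioi.1 hx)
      simp only [g, abs_of_nonneg hx0, neg_one_mul]) measurableSet_Ioi

noncomputable def IG : ℝ := ∫ x : ℝ, g x
lemma IG_nonneg : 0 ≤ IG := integral_nonneg g_nonneg

noncomputable def convG (f : ℝ → ℝ) (x : ℝ) : ℝ := ∫ y : ℝ, g (x - y) * f y

section Conv
variable {f : ℝ → ℝ} {C : ℝ}

lemma conv_integrand_integrable (hfi : Integrable f) (x : ℝ) :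
    Integrable (fun y => g (x - y) * f y) := by
  apply hfi.bdd_mul (c := 1/2) ((g_cont.comp (continuous_const.sub continuous_id)).aestronglyMeasurable)
  exact Eventually.of_forall (fun y => by simpa [Real.norm_eq_abs] using abs_g_le (x - y))

lemma abs_convG_le (hfi : Integrable f) (hC : ∀ y, |f y| ≤ C) (x : ℝ) :
    |convG f x| ≤ C * IG := by
  have hb : Integrable (fun y => C * g (x - y)) := (g_integrable.comp_sub_left x).const_mul C
  have h := norm_integral_le_of_norm_le hb (Eventually.of_forall (fun y => by
    have h1 : ‖g (x - y) * f y‖ = g (x - y) * |f y| := by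
      rw [Real.norm_eq_abs, abs_mul, abs_of_nonneg (g_nonneg _)]
    rw [h1, mul_comm C (g (x - y))]
    exact mul_le_mul_of_nonneg_left (hC y) (g_nonneg _)))
  calc |convG f x| ≤ ∫ y : ℝ, C * g (x - y) := h
    _ = C * ∫ y : ℝ, g (x - y) := integral_const_mul C _
    _ = C * IG := by rw [integral_sub_left_eq_self g volume x]; rfl

lemma tendsto_convG_atTop (hfc : Continuous f) (hfi : Integrable f) :
    Tendsto (convG f) atTop (𝓝 0) := by
  have h := tendsto_integral_filter_of_dominated_convergence (μ := volume)
    (F := fun x y => g (x - y) * f y) (f := fun _ => (0:ℝ)) (bound := fun y => |f y| / 2)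
    (Eventually.of_forall fun x =>
      ((g_cont.comp (continuous_const.sub continuous_id)).mul hfc).aestronglyMeasurable)
    (Eventually.of_forall fun x => Eventually.of_forall fun y => by
      have : ‖g (x - y) * f y‖ = g (x - y) * |f y| := by
        rw [Real.norm_eq_abs, abs_mul, abs_of_nonneg (g_nonneg _)]
      rw [this]
      calc g (x - y) * |f y| ≤ (1/2) * |f y| :=
            mul_le_mul_of_nonneg_right (g_le_half _) (abs_nonneg _)
        _ = |f y| / 2 := by ring)
    (hfi.abs.div_const 2)
    (Eventually.of_forall fun y => by
      have h1 : Tendsto (fun x : ℝ => x - y) atTop atTop := tendsto_atTop_add_const_right _ _ tendsto_id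
      have h2 : Tendsto (fun x : ℝ => -|x - y|) atTop atBot :=
        tendsto_neg_atTop_atBot.comp (tendsto_abs_atTop_atTop.comp h1)
      have h3 : Tendsto (fun x : ℝ => g (x - y)) atTop (𝓝 0) := by
        have := (Real.tendsto_exp_atBot.comp h2).div_const 2
        simpa [g, Function.comp_def] using this
      have h4 := h3.mul_const (f y)
      simpa using h4)
  rw [integral_zero] at h
  convert h using 1
  funext x
  simp only [convG]

lemma tendsto_convG_atBot (hfc : Continuous f) (hfi : Integrable f) :
    Tendsto (convG f) atBot (𝓝 0) := by
  have h := tendsto_integral_filter_of_dominated_convergence (μ := volume)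
    (F := fun x y => g (x - y) * f y) (f := fun _ => (0:ℝ)) (bound := fun y => |f y| / 2)
    (Eventually.of_forall fun x =>
      ((g_cont.comp (continuous_const.sub continuous_id)).mul hfc).aestronglyMeasurable)
    (Eventually.of_forall fun x => Eventually.of_forall fun y => by
      have : ‖g (x - y) * f y‖ = g (x - y) * |f y| := by
        rw [Real.norm_eq_abs, abs_mul, abs_of_nonneg (g_nonneg _)]
      rw [this]
      calc g (x - y) * |f y| ≤ (1/2) * |f y| :=
            mul_le_mul_of_nonneg_right (g_le_half _) (abs_nonneg _)
        _ = |f y| / 2 := by ring)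
    (hfi.abs.div_const 2)
    (Eventually.of_forall fun y => by
      have h1 : Tendsto (fun x : ℝ => x - y) atBot atBot := tendsto_atBot_add_const_right _ _ tendsto_id
      have h2 : Tendsto (fun x : ℝ => -|x - y|) atBot atBot :=
        tendsto_neg_atTop_atBot.comp (tendsto_abs_atBot_atTop.comp h1)
      have h3 : Tendsto (fun x : ℝ => g (x - y)) atBot (𝓝 0) := by
        have := (Real.tendsto_exp_atBot.comp h2).div_const 2
        simpa [g, Function.comp_def] using this
      have h4 := h3.mul_const (f y)
      simpa using h4)
  rw [integral_zero] at h
  convert h using 1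
  funext x
  simp only [convG]

lemma hasDerivAt_integral_Iic (q : ℝ → ℝ) (hq : Continuous q)
    (hqi : ∀ a : ℝ, IntegrableOn q (Iic a)) (x : ℝ) :
    HasDerivAt (fun a => ∫ y in Iic a, q y) (q x) x := by
  have heq : (fun a => ∫ y in Iic a, q y)
      = fun a => (∫ y in Iic (0:ℝ), q y) + ∫ y in (0:ℝ)..a, q y := by
    funext a
    rw [← intervalIntegral.integral_Iic_sub_Iic (hqi 0) (hqi a)]; ring
  rw [heq]
  exact ((hq.integral_hasStrictDerivAt 0 x).hasDerivAt).const_add _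

lemma integral_Ioi_sub_Ioi {q : ℝ → ℝ} {a b : ℝ} (hqa : IntegrableOn q (Ioi a))
    (hqb : IntegrableOn q (Ioi b)) :
    (∫ y in Ioi a, q y) - (∫ y in Ioi b, q y) = ∫ y in a..b, q y := by
  rcases le_total a b with hab | hab
  · have h := setIntegral_union (μ := volume) (Ioc_disjoint_Ioi le_rfl) measurableSet_Ioi
        (hqa.mono_set Ioc_subset_Ioi_self) hqb
    rw [Ioc_union_Ioi_eq_Ioi hab] at h
    rw [intervalIntegral.integral_of_le hab]
    linarith
  · have h := setIntegral_union (μ := volume) (Ioc_disjoint_Ioi le_rfl) measurableSet_Ioi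
        (hqb.mono_set Ioc_subset_Ioi_self) hqa
    rw [Ioc_union_Ioi_eq_Ioi hab] at h
    rw [intervalIntegral.integral_symm, intervalIntegral.integral_of_le hab]
    linarith

lemma hasDerivAt_integral_Ioi (q : ℝ → ℝ) (hq : Continuous q)
    (hqi : ∀ a : ℝ, IntegrableOn q (Ioi a)) (x : ℝ) :
    HasDerivAt (fun a => ∫ y in Ioi a, q y) (-q x) x := by
  have heq : (fun a => ∫ y in Ioi a, q y)
      = fun a => (∫ y in Ioi (0:ℝ), q y) - ∫ y in (0:ℝ)..a, q y := by
    funext a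
    rw [← integral_Ioi_sub_Ioi (hqi 0) (hqi a)]; ring
  rw [heq]
  exact ((hq.integral_hasStrictDerivAt 0 x).hasDerivAt).const_sub _

lemma expmul_integrableOn_Iic (hfi : Integrable f) (a : ℝ) :
    IntegrableOn (fun y => Real.exp y * f y) (Iic a) := by
  apply Integrable.bdd_mul (c := Real.exp a) hfi.restrict
    Real.continuous_exp.aestronglyMeasurable
  refine (ae_restrict_iff' measurableSet_Iic).2 (Eventually.of_forall fun y hy => ?_)
  rw [Real.norm_eq_abs, abs_of_nonneg (Real.exp_pos _).le]
  exact Real.exp_le_exp.2 hy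

lemma expmul_integrableOn_Ioi (hfi : Integrable f) (a : ℝ) :
    IntegrableOn (fun y => Real.exp (-y) * f y) (Ioi a) := by
  apply Integrable.bdd_mul (c := Real.exp (-a)) hfi.restrict
    (Real.continuous_exp.comp continuous_neg).aestronglyMeasurable
  refine (ae_restrict_iff' measurableSet_Ioi).2 (Eventually.of_forall fun y hy => ?_)
  simp only [Function.comp_apply, Real.norm_eq_abs, abs_of_nonneg (Real.exp_pos _).le]
  exact Real.exp_le_exp.2 (neg_le_neg (le_of_lt hy))

lemma convG_eq (hfi : Integrable f) (x : ℝ) :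
    convG f x = (Real.exp (-x) * ∫ y in Iic x, Real.exp y * f y) / 2
      + (Real.exp x * ∫ y in Ioi x, Real.exp (-y) * f y) / 2 := by
  have h_left : IntegrableOn (fun y => g (x - y) * f y) (Iic x) :=
    (conv_integrand_integrable hfi x).integrableOn
  have h_right : IntegrableOn (fun y => g (x - y) * f y) (Ioi x) :=
    (conv_integrand_integrable hfi x).integrableOn
  have hsplit := intervalIntegral.integral_Iic_add_Ioi (b := x) (μ := volume) h_left h_right
  have e1 : ∫ y in Iic x, g (x - y) * f y
      = Real.exp (-x) / 2 * ∫ y in Iic x, Real.exp y * f y := by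
    rw [← integral_const_mul]
    refine setIntegral_congr_fun measurableSet_Iic (fun y hy => ?_)
    have h1 : |x - y| = x - y := abs_of_nonneg (sub_nonneg.2 hy)
    simp only [g, h1]
    rw [show -(x - y) = -x + y by ring, Real.exp_add]; ring
  have e2 : ∫ y in Ioi x, g (x - y) * f y
      = Real.exp x / 2 * ∫ y in Ioi x, Real.exp (-y) * f y := by
    rw [← integral_const_mul]
    refine setIntegral_congr_fun measurableSet_Ioi (fun y hy => ?_)
    have h1 : |x - y| = y - x := by
      rw [abs_of_nonpos (sub_nonpos.2 (le_of_lt hy))]; ring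
    simp only [g, h1]
    rw [show -(y - x) = x + -y by ring, Real.exp_add]; ring
  rw [convG, ← hsplit, e1, e2]; ring

lemma differentiableAt_convG (hfc : Continuous f) (hfi : Integrable f) (x : ℝ) :
    DifferentiableAt ℝ (convG f) x := by
  have hA := hasDerivAt_integral_Iic (fun y => Real.exp y * f y)
    (Real.continuous_exp.mul hfc) (fun a => expmul_integrableOn_Iic hfi a) x
  have hB := hasDerivAt_integral_Ioi (fun y => Real.exp (-y) * f y)
    ((Real.continuous_exp.comp continuous_neg).mul hfc) (fun a => expmul_integrableOn_Ioi hfi a) x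
  have h1 : HasDerivAt (fun a : ℝ => Real.exp (-a)) (-Real.exp (-x)) x := by
    simpa [Function.comp_def] using (Real.hasDerivAt_exp (-x)).comp x (hasDerivAt_neg x)
  have h2 : HasDerivAt Real.exp (Real.exp x) x := Real.hasDerivAt_exp x
  have hsum := ((h1.mul hA).div_const 2).add ((h2.mul hB).div_const 2)
  have heq : convG f = fun a => (Real.exp (-a) * ∫ y in Iic a, Real.exp y * f y) / 2
      + (Real.exp a * ∫ y in Ioi a, Real.exp (-y) * f y) / 2 :=
    funext (fun a => convG_eq hfi a)
  rw [heq]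
  exact hsum.differentiableAt
end Conv

end AuxCH

/-- The quantity `H₁(t) = ∫ u(t,x) dx` is conserved. -/
theorem conservation_of_mass
    (n : ℕ) (hn : 0 < n) (T : ℝ≥0∞) (hT : 0 < T) (u : ℝ → ℝ → ℝ)
    (hu : IsClassicalSolution n T u) :
    ∀ t ∈ timeDomain T, (∫ x : ℝ, u t x) = ∫ x : ℝ, u 0 x := by
  intro t ht
  obtain ⟨ht0, htT⟩ := ht
  have hmem : ∀ s : ℝ, 0 ≤ s → s ≤ t → s ∈ timeDomain T := fun s h0 h1 =>
    ⟨h0, lt_of_le_of_lt (ENNReal.ofReal_le_ofReal h1) htT⟩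
  have h0mem : (0:ℝ) ∈ timeDomain T := hmem 0 le_rfl ht0
  have htmem : t ∈ timeDomain T := ⟨ht0, htT⟩
  obtain ⟨M, hM⟩ := hu.sup_bound t htmem
  have hM0 : 0 ≤ M := le_trans (by positivity) (hM 0 ⟨le_rfl, ht0⟩ 0)
  have hMu : ∀ s ∈ Set.Icc (0:ℝ) t, ∀ x : ℝ, |u s x| ≤ M := fun s hs x =>
    le_trans (le_add_of_nonneg_right (abs_nonneg _)) (hM s hs x)
  have hMux : ∀ s ∈ Set.Icc (0:ℝ) t, ∀ x : ℝ, |ux u s x| ≤ M := fun s hs x =>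
    le_trans (le_add_of_nonneg_left (abs_nonneg _)) (hM s hs x)
  have hee : n - 1 + 2 = n + 1 := by omega
  set c1 : ℝ := (n:ℝ)/2 with hc1def
  set c2 : ℝ := (n:ℝ)*((n:ℝ)+3)/(2*((n:ℝ)+1)) with hc2def
  have hc1 : 0 ≤ c1 := by positivity
  have hc2 : 0 ≤ c2 := by positivity
  set CM : ℝ := (c1 + c2) * M^(n+1) with hCMdef
  have hCM0 : 0 ≤ CM := by positivity
  -- continuity of slices
  have cont_ut_slice : ∀ s ∈ timeDomain T, Continuous (fun x => ut u s x) := by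
    intro s hs
    rw [← continuousOn_univ]
    exact hu.cont_ut.comp ((continuous_const.prodMk continuous_id).continuousOn)
      (fun x _ => ⟨hs, trivial⟩)
  have hu_cont : ∀ s ∈ timeDomain T, Continuous (u s) := fun s hs =>
    (hu.contDiff_x s hs).continuous
  have hux_cont : ∀ s ∈ timeDomain T, Continuous (ux u s) := fun s hs =>
    (hu.contDiff_x s hs).continuous_deriv (by norm_num)
  have hfLoc_eq : ∀ s : ℝ, fLoc n u s = fun y =>
      c1 * u s y ^ (n - 1) * ux u s y ^ 2 + c2 * u s y ^ (n + 1) := fun s => rfl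
  have hf_cont : ∀ s ∈ timeDomain T, Continuous (fLoc n u s) := by
    intro s hs
    rw [hfLoc_eq]
    exact ((continuous_const.mul ((hu_cont s hs).pow _)).mul ((hux_cont s hs).pow 2)).add
      (continuous_const.mul ((hu_cont s hs).pow _))
  have hf_int : ∀ s ∈ timeDomain T, Integrable (fLoc n u s) := by
    intro s hs
    obtain ⟨Cu, hCu⟩ := (hu.decay_u s hs).1
    have hCu0 : 0 ≤ Cu := le_trans (abs_nonneg _) (hCu 0)
    have h1 : Integrable (fun y => c1 * u s y ^ (n - 1) * ux u s y ^ 2) := by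
      apply ((hu.decay_ux s hs).2.2.1).bdd_mul (c := |c1| * Cu ^ (n - 1))
        ((continuous_const.mul ((hu_cont s hs).pow _)).aestronglyMeasurable)
      refine Eventually.of_forall (fun y => ?_)
      simp only [Real.norm_eq_abs, Pi.mul_apply, Pi.pow_apply]; rw [abs_mul, abs_pow]
      exact mul_le_mul_of_nonneg_left (pow_le_pow_left₀ (abs_nonneg _) (hCu y) _) (abs_nonneg _)
    have h2 : Integrable (fun y => c2 * u s y ^ (n - 1) * u s y ^ 2) := by
      apply ((hu.decay_u s hs).2.2.1).bdd_mul (c := |c2| * Cu ^ (n - 1))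
        ((continuous_const.mul ((hu_cont s hs).pow _)).aestronglyMeasurable)
      refine Eventually.of_forall (fun y => ?_)
      simp only [Real.norm_eq_abs, Pi.mul_apply, Pi.pow_apply]; rw [abs_mul, abs_pow]
      exact mul_le_mul_of_nonneg_left (pow_le_pow_left₀ (abs_nonneg _) (hCu y) _) (abs_nonneg _)
    have h2' : Integrable (fun y => c2 * u s y ^ (n + 1)) := by
      refine h2.congr (Filter.Eventually.of_forall fun y => ?_)
      show c2 * u s y ^ (n - 1) * u s y ^ 2 = c2 * u s y ^ (n + 1)
      rw [mul_assoc, ← pow_add, hee]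
    rw [hfLoc_eq]
    exact h1.add h2'
  have hf_bound : ∀ s ∈ Set.Icc (0:ℝ) t, ∀ y : ℝ, |fLoc n u s y| ≤ CM := by
    intro s hs y
    rw [hfLoc_eq]
    have smem : s ∈ timeDomain T := hmem s hs.1 hs.2
    have b1 : |c1 * u s y ^ (n - 1) * ux u s y ^ 2| ≤ c1 * M ^ (n + 1) := by
      rw [abs_mul, abs_mul, abs_pow, abs_pow, abs_of_nonneg hc1]
      calc c1 * |u s y| ^ (n - 1) * |ux u s y| ^ 2 ≤ c1 * M ^ (n - 1) * M ^ 2 := by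
            gcongr
            exacts [hMu s hs y, hMux s hs y]
        _ = c1 * M ^ (n + 1) := by rw [mul_assoc, ← pow_add, hee]
    have b2 : |c2 * u s y ^ (n + 1)| ≤ c2 * M ^ (n + 1) := by
      rw [abs_mul, abs_pow, abs_of_nonneg hc2]
      gcongr
      exact hMu s hs y
    calc |c1 * u s y ^ (n - 1) * ux u s y ^ 2 + c2 * u s y ^ (n + 1)|
        ≤ |c1 * u s y ^ (n - 1) * ux u s y ^ 2| + |c2 * u s y ^ (n + 1)| := abs_add_le _ _
      _ ≤ c1 * M ^ (n + 1) + c2 * M ^ (n + 1) := add_le_add b1 b2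
      _ = CM := by rw [hCMdef]; ring
  -- the antiderivative G
  set G : ℝ → ℝ → ℝ := fun s x => u s x ^ (n + 1) / ((n:ℝ) + 1) + convG (fLoc n u s) x
    with hGdef
  have hG_deriv : ∀ s ∈ timeDomain T, ∀ x : ℝ, HasDerivAt (G s) (-(ut u s x)) x := by
    intro s hs x
    have hud : HasDerivAt (u s) (ux u s x) x :=
      (((hu.contDiff_x s hs).differentiable (by norm_num)) x).hasDerivAt
    have hne : ((n:ℝ) + 1) ≠ 0 := by positivity
    have hP : HasDerivAt (fun z => u s z ^ (n + 1) / ((n:ℝ) + 1))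
        (u s x ^ n * ux u s x) x := by
      have h := (hud.pow (n + 1)).div_const ((n:ℝ) + 1)
      refine h.congr_deriv ?_
      push_cast [Nat.add_sub_cancel]
      rw [div_eq_iff hne]
      ring
    have hconvd : HasDerivAt (convG (fLoc n u s)) (FLoc n u s x) x :=
      (differentiableAt_convG (hf_cont s hs) (hf_int s hs) x).hasDerivAt
    have hnl := hu.nonlocal s hs x
    have hval : u s x ^ n * ux u s x + FLoc n u s x = -(ut u s x) := by linarith
    have := hP.add hconvd
    rw [hval] at this
    exact this
  have hG_bound : ∀ s ∈ Set.Icc (0:ℝ) t, ∀ x : ℝ, |G s x| ≤ M ^ (n + 1) + CM * IG := by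
    intro s hs x
    have smem : s ∈ timeDomain T := hmem s hs.1 hs.2
    have b1 : |u s x ^ (n + 1) / ((n:ℝ) + 1)| ≤ M ^ (n + 1) := by
      rw [abs_div, abs_pow, abs_of_nonneg (by positivity : (0:ℝ) ≤ (n:ℝ) + 1)]
      calc |u s x| ^ (n + 1) / ((n:ℝ) + 1) ≤ M ^ (n + 1) / ((n:ℝ) + 1) := by
            gcongr
            exact hMu s hs x
        _ ≤ M ^ (n + 1) := div_le_self (by positivity) (by simp)
    have b2 : |convG (fLoc n u s) x| ≤ CM * IG :=
      abs_convG_le (hf_int s smem) (hf_bound s hs) x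
    calc |G s x| ≤ |u s x ^ (n + 1) / ((n:ℝ) + 1)| + |convG (fLoc n u s) x| := abs_add_le _ _
      _ ≤ M ^ (n + 1) + CM * IG := add_le_add b1 b2
  have hG_top : ∀ s ∈ timeDomain T, Filter.Tendsto (G s) Filter.atTop (nhds 0) := by
    intro s hs
    have hu0 : Filter.Tendsto (u s) Filter.atTop (nhds 0) := by
      have h := (hu.decay_u s hs).2.2.2
      rw [cocompact_eq_atBot_atTop] at h
      exact h.mono_left le_sup_right
    have t1 : Filter.Tendsto (fun x => u s x ^ (n + 1) / ((n:ℝ) + 1)) Filter.atTop (nhds 0) := by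
      have := (hu0.pow (n + 1)).div_const ((n:ℝ) + 1)
      simpa using this
    have t2 := tendsto_convG_atTop (hf_cont s hs) (hf_int s hs)
    have := t1.add t2
    simpa using this
  have hG_bot : ∀ s ∈ timeDomain T, Filter.Tendsto (G s) Filter.atBot (nhds 0) := by
    intro s hs
    have hu0 : Filter.Tendsto (u s) Filter.atBot (nhds 0) := by
      have h := (hu.decay_u s hs).2.2.2
      rw [cocompact_eq_atBot_atTop] at h
      exact h.mono_left le_sup_left
    have t1 : Filter.Tendsto (fun x => u s x ^ (n + 1) / ((n:ℝ) + 1)) Filter.atBot (nhds 0) := by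
      have := (hu0.pow (n + 1)).div_const ((n:ℝ) + 1)
      simpa using this
    have t2 := tendsto_convG_atBot (hf_cont s hs) (hf_int s hs)
    have := t1.add t2
    simpa using this
  -- FTC in x
  have hk : ∀ s ∈ timeDomain T, ∀ R : ℝ, 0 ≤ R →
      ∫ x in Set.Ioc (-R) R, ut u s x = G s (-R) - G s R := by
    intro s hs R hR
    have hRR : -R ≤ R := by linarith
    have hFTC := intervalIntegral.integral_eq_sub_of_hasDerivAt
      (f := G s) (f' := fun x => -(ut u s x))
      (fun x _ => hG_deriv s hs x)
      (((cont_ut_slice s hs).neg).intervalIntegrable (-R) R)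
    have h2 : (∫ x in (-R)..R, -(ut u s x)) = - ∫ x in (-R)..R, ut u s x :=
      intervalIntegral.integral_neg
    have h3 : (∫ x in Set.Ioc (-R) R, ut u s x) = ∫ x in (-R)..R, ut u s x :=
      (intervalIntegral.integral_of_le hRR).symm
    rw [h3]
    rw [h2] at hFTC
    linarith
  -- FTC in time
  have hFTCt : ∀ x : ℝ, u t x - u 0 x = ∫ s in Set.Ioc (0:ℝ) t, ut u s x := by
    intro x
    have hcontOn : ContinuousOn (fun s => ut u s x) (Set.Icc (0:ℝ) t) :=
      hu.cont_ut.comp ((continuous_id.prodMk continuous_const).continuousOn)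
        (fun s hsI => ⟨hmem s hsI.1 hsI.2, trivial⟩)
    have hII : IntervalIntegrable (fun s => ut u s x) volume 0 t := by
      apply ContinuousOn.intervalIntegrable
      rwa [Set.uIcc_of_le ht0]
    have h1 := intervalIntegral.integral_eq_sub_of_hasDerivAt
      (f := fun s => u s x) (f' := fun s => ut u s x)
      (fun s hsI => by
        rw [Set.uIcc_of_le ht0] at hsI
        exact (hu.diff_t x s (hmem s hsI.1 hsI.2)).hasDerivAt) hII
    rw [← h1, intervalIntegral.integral_of_le ht0]
  -- integrability of the difference
  have h_int : Integrable (fun x => u t x - u 0 x) :=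
    ((hu.decay_u t htmem).2.1).sub ((hu.decay_u 0 h0mem).2.1)
  -- joint integrability on rectangles
  have hprod : ∀ R : ℕ, Integrable (Function.uncurry fun s x => ut u s x)
      ((volume.restrict (Set.Ioc (0:ℝ) t)).prod (volume.restrict (Set.Ioc (-(R:ℝ)) R))) := by
    intro R
    have hsub : (Set.Icc (0:ℝ) t ×ˢ Set.Icc (-(R:ℝ)) (R:ℝ)) ⊆ timeDomain T ×ˢ Set.univ :=
      fun p hp => ⟨hmem p.1 hp.1.1 hp.1.2, trivial⟩
    have hcomp : IntegrableOn (fun p : ℝ × ℝ => ut u p.1 p.2)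
        (Set.Icc (0:ℝ) t ×ˢ Set.Icc (-(R:ℝ)) (R:ℝ)) :=
      (hu.cont_ut.mono hsub).integrableOn_compact (isCompact_Icc.prod isCompact_Icc)
    rw [Measure.prod_restrict, ← Measure.volume_eq_prod]
    exact hcomp.mono_set (Set.prod_mono Set.Ioc_subset_Icc_self Set.Ioc_subset_Icc_self)
  -- the truncated integrals
  have hJ_eq : ∀ R : ℕ, (∫ x in Set.Ioc (-(R:ℝ)) (R:ℝ), (u t x - u 0 x))
      = ∫ s in Set.Ioc (0:ℝ) t, ∫ x in Set.Ioc (-(R:ℝ)) (R:ℝ), ut u s x := by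
    intro R
    have e1 : (∫ x in Set.Ioc (-(R:ℝ)) (R:ℝ), (u t x - u 0 x))
        = ∫ x in Set.Ioc (-(R:ℝ)) (R:ℝ), ∫ s in Set.Ioc (0:ℝ) t, ut u s x :=
      setIntegral_congr_fun measurableSet_Ioc (fun x _ => hFTCt x)
    rw [e1]
    exact (integral_integral_swap (hprod R)).symm
  have lim1 : Filter.Tendsto (fun R : ℕ => ∫ x in Set.Ioc (-(R:ℝ)) (R:ℝ), (u t x - u 0 x))
      Filter.atTop (nhds (∫ x : ℝ, (u t x - u 0 x))) := by
    have h := MeasureTheory.intervalIntegral_tendsto_integral (μ := volume)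
      (a := fun R : ℕ => -(R:ℝ)) (b := fun R : ℕ => (R:ℝ)) h_int
      (tendsto_neg_atTop_atBot.comp tendsto_natCast_atTop_atTop)
      tendsto_natCast_atTop_atTop
    refine h.congr (fun R => ?_)
    show (∫ x in (-(R:ℝ))..(R:ℝ), (u t x - u 0 x)) = _
    rw [intervalIntegral.integral_of_le (neg_le_self (Nat.cast_nonneg R))]
  have lim2 : Filter.Tendsto (fun R : ℕ => ∫ x in Set.Ioc (-(R:ℝ)) (R:ℝ), (u t x - u 0 x))
      Filter.atTop (nhds 0) := by
    have hDCT := MeasureTheory.tendsto_integral_filter_of_dominated_convergence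
      (μ := volume.restrict (Set.Ioc (0:ℝ) t)) (l := (Filter.atTop : Filter ℕ))
      (F := fun R s => ∫ x in Set.Ioc (-(R:ℝ)) (R:ℝ), ut u s x)
      (f := fun _ => (0:ℝ))
      (bound := fun _ => 2 * (M ^ (n + 1) + CM * IG))
      (Filter.Eventually.of_forall fun R => ((hprod R).integral_prod_left).aestronglyMeasurable)
      (Filter.Eventually.of_forall fun R => (ae_restrict_iff' measurableSet_Ioc).2
        (Filter.Eventually.of_forall fun s hsI => by
          have smem : s ∈ timeDomain T := hmem s hsI.1.le hsI.2
          have hsIcc : s ∈ Set.Icc (0:ℝ) t := ⟨hsI.1.le, hsI.2⟩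
          show ‖∫ x in Set.Ioc (-(R:ℝ)) (R:ℝ), ut u s x‖ ≤ 2 * (M ^ (n + 1) + CM * IG)
          rw [Real.norm_eq_abs, hk s smem (R:ℝ) (Nat.cast_nonneg R)]
          calc |G s (-(R:ℝ)) - G s (R:ℝ)| ≤ |G s (-(R:ℝ))| + |G s (R:ℝ)| := abs_sub _ _
            _ ≤ 2 * (M ^ (n + 1) + CM * IG) := by
                have := hG_bound s hsIcc (-(R:ℝ))
                have := hG_bound s hsIcc (R:ℝ)
                linarith))
      (integrable_const_iff.2 (Or.inr (by
        rw [isFiniteMeasure_iff, Measure.restrict_apply_univ]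
        exact measure_Ioc_lt_top)))
      ((ae_restrict_iff' measurableSet_Ioc).2 (Filter.Eventually.of_forall fun s hsI => by
        have smem : s ∈ timeDomain T := hmem s hsI.1.le hsI.2
        have hb : Filter.Tendsto (fun R : ℕ => G s (-(R:ℝ))) Filter.atTop (nhds 0) :=
          (hG_bot s smem).comp (tendsto_neg_atTop_atBot.comp tendsto_natCast_atTop_atTop)
        have hbt : Filter.Tendsto (fun R : ℕ => G s (R:ℝ)) Filter.atTop (nhds 0) :=
          (hG_top s smem).comp tendsto_natCast_atTop_atTop
        have := hb.sub hbt
        refine (Filter.Tendsto.congr (fun R => (hk s smem (R:ℝ) (Nat.cast_nonneg R)).symm) ?_)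
        simpa using this))
    have h0int : (∫ _ in Set.Ioc (0:ℝ) t, (0:ℝ)) = 0 := integral_zero _ _
    rw [h0int] at hDCT
    refine Filter.Tendsto.congr (fun R => (hJ_eq R).symm) hDCT
  have hz : (∫ x : ℝ, (u t x - u 0 x)) = 0 := tendsto_nhds_unique lim1 lim2
  rw [integral_sub ((hu.decay_u t htmem).2.1) ((hu.decay_u 0 h0mem).2.1)] at hz
  linarith
end

section
/- Let f : ℝ → ℝ be continuous, nonnegative and integrable, and let F(x) := (∂_x g ∗ f)(x) = −(1/2)∫_ℝ sgn(x−y) e^{−|x−y|} f(y) dy (which equals the derivative of g ∗ f). Suppose there exist real numbers x₀ < x₁ such that f vanishes identically on the interval (x₀,x₁) and F(x₀) = F(x₁). Then f is identically zero on ℝ. -/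
open Real MeasureTheory Filter Topology

/-- `F = ∂ₓ(g ∗ f)`, given by `F(x) = -(1/2)∫ sgn(x-y) e^{-|x-y|} f(y) dy`. -/
noncomputable def Fconv (f : ℝ → ℝ) (x : ℝ) : ℝ :=
  -(1 / 2) * ∫ y : ℝ, Real.sign (x - y) * Real.exp (-|x - y|) * f y

lemma measurable_realSign : Measurable Real.sign := by
  have : Real.sign = fun r : ℝ => if r < 0 then (-1 : ℝ) else if 0 < r then 1 else 0 := by
    funext r; rfl
  rw [this]
  refine Measurable.ite ?_ measurable_const (Measurable.ite ?_ measurable_const measurable_const)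
  · exact measurableSet_lt measurable_id measurable_const
  · exact measurableSet_lt measurable_const measurable_id

lemma abs_realSign_le (t : ℝ) : |Real.sign t| ≤ 1 := by
  rcases Real.sign_apply_eq t with h | h | h <;> rw [h] <;> norm_num

lemma integrable_kernel (f : ℝ → ℝ) (hc : Continuous f) (hi : Integrable f) (x : ℝ) :
    Integrable (fun y => Real.sign (x - y) * Real.exp (-|x - y|) * f y) := by
  apply hi.mono
  · apply AEStronglyMeasurable.mul _ hc.aestronglyMeasurable
    apply Measurable.aestronglyMeasurable
    exact (measurable_realSign.comp (measurable_const.sub measurable_id)).mul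
      ((measurable_const.sub measurable_id).abs.neg.exp)
  · refine Filter.Eventually.of_forall fun y => ?_
    have h1 : |Real.sign (x - y)| ≤ 1 := abs_realSign_le _
    have h2 : Real.exp (-|x - y|) ≤ 1 := by
      rw [← Real.exp_zero]
      exact Real.exp_le_exp.2 (neg_nonpos.2 (abs_nonneg _))
    have h2' : (0:ℝ) ≤ Real.exp (-|x - y|) := (Real.exp_pos _).le
    rw [Real.norm_eq_abs, Real.norm_eq_abs, abs_mul, abs_mul, abs_of_nonneg h2']
    calc |Real.sign (x - y)| * Real.exp (-|x - y|) * |f y|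
        ≤ 1 * 1 * |f y| := by
          apply mul_le_mul_of_nonneg_right _ (abs_nonneg _)
          exact mul_le_mul h1 h2 h2' zero_le_one
      _ = |f y| := by ring

lemma Fconv_eq (f : ℝ → ℝ) (hc : Continuous f) (hi : Integrable f) (x : ℝ) :
    Fconv f x = -(1 / 2) * (Real.exp (-x) * (∫ y in Set.Iio x, Real.exp y * f y)
      - Real.exp x * ∫ y in Set.Ioi x, Real.exp (-y) * f y) := by
  have hK := integrable_kernel f hc hi x
  unfold Fconv
  congr 1
  rw [← intervalIntegral.integral_Iio_add_Ici (b := x) hK.integrableOn hK.integrableOn]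
  have h1 : ∫ y in Set.Iio x, Real.sign (x - y) * Real.exp (-|x - y|) * f y
      = Real.exp (-x) * ∫ y in Set.Iio x, Real.exp y * f y := by
    rw [← integral_const_mul]
    apply setIntegral_congr_fun measurableSet_Iio
    intro y hy
    have hxy : (0:ℝ) < x - y := by simpa [sub_pos] using hy
    simp only [Real.sign_of_pos hxy, abs_of_pos hxy,
      show -(x - y) = -x + y by ring, Real.exp_add]
    ring
  have h2 : ∫ y in Set.Ici x, Real.sign (x - y) * Real.exp (-|x - y|) * f y
      = -(Real.exp x * ∫ y in Set.Ioi x, Real.exp (-y) * f y) := by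
    rw [integral_Ici_eq_integral_Ioi, ← integral_const_mul, ← integral_neg]
    apply setIntegral_congr_fun measurableSet_Ioi
    intro y hy
    have hxy : x - y < 0 := by simpa [sub_neg] using hy
    simp only [Real.sign_of_neg hxy, abs_of_neg hxy,
      show -(-(x - y)) = x + -y by ring, Real.exp_add]
    ring
  rw [h1, h2]
  exact (sub_eq_add_neg _ _).symm

/-- If a continuous, nonnegative, integrable `f` vanishes on `(x₀,x₁)` and
`F(x₀) = F(x₁)`, where `F = ∂ₓ(g ∗ f)`, then `f ≡ 0`. -/
theorem vanishing_from_equal_potentials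
    (f : ℝ → ℝ) (hc : Continuous f) (hnn : ∀ x : ℝ, 0 ≤ f x) (hi : Integrable f)
    (x₀ x₁ : ℝ) (hx : x₀ < x₁)
    (hvanish : ∀ x ∈ Set.Ioo x₀ x₁, f x = 0)
    (hF : Fconv f x₀ = Fconv f x₁) :
    ∀ x : ℝ, f x = 0 := by
  -- integrability of the weighted integrands
  have hiA : ∀ x : ℝ, IntegrableOn (fun y => Real.exp y * f y) (Set.Iio x) := by
    intro x
    apply Integrable.mono ((hi.restrict (s := Set.Iio x)).const_mul (Real.exp x))
    · exact ((Real.continuous_exp.mul hc).aestronglyMeasurable).restrict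
    · rw [ae_restrict_iff' measurableSet_Iio]
      refine Filter.Eventually.of_forall fun y hy => ?_
      rw [Real.norm_eq_abs, Real.norm_eq_abs, abs_mul, abs_mul,
        abs_of_nonneg (Real.exp_pos y).le, abs_of_nonneg (Real.exp_pos x).le]
      exact mul_le_mul_of_nonneg_right (Real.exp_le_exp.2 (le_of_lt hy)) (abs_nonneg _)
  have hiB : ∀ x : ℝ, IntegrableOn (fun y => Real.exp (-y) * f y) (Set.Ioi x) := by
    intro x
    apply Integrable.mono ((hi.restrict (s := Set.Ioi x)).const_mul (Real.exp (-x)))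
    · exact (((Real.continuous_exp.comp continuous_neg).mul hc).aestronglyMeasurable).restrict
    · rw [ae_restrict_iff' measurableSet_Ioi]
      refine Filter.Eventually.of_forall fun y hy => ?_
      rw [Real.norm_eq_abs, Real.norm_eq_abs, abs_mul, abs_mul,
        abs_of_nonneg (Real.exp_pos (-y)).le, abs_of_nonneg (Real.exp_pos (-x)).le]
      exact mul_le_mul_of_nonneg_right (Real.exp_le_exp.2 (by linarith [Set.mem_Ioi.1 hy]))
        (abs_nonneg _)
  set A := ∫ y in Set.Iio x₀, Real.exp y * f y with hA
  set B := ∫ y in Set.Ioi x₁, Real.exp (-y) * f y with hB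
  -- the integrals at x₁ / x₀ coincide with A / B
  have hA1 : ∫ y in Set.Iio x₁, Real.exp y * f y = A := by
    rw [← Set.Iio_union_Ico_eq_Iio hx.le,
      setIntegral_union ((Set.Iio_disjoint_Ici le_rfl).mono_right Set.Ico_subset_Ici_self) measurableSet_Ico (hiA x₀)
        ((hiA x₁).mono_set (Set.Ico_subset_Iio_self.trans (le_refl _)))]
    have : ∫ y in Set.Ico x₀ x₁, Real.exp y * f y = 0 := by
      rw [integral_Ico_eq_integral_Ioo]
      rw [setIntegral_congr_fun measurableSet_Ioo (g := fun _ => (0:ℝ))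
        (fun y hy => by rw [hvanish y hy, mul_zero])]
      simp
    rw [this, add_zero]
  have hB0 : ∫ y in Set.Ioi x₀, Real.exp (-y) * f y = B := by
    rw [← Set.Ioc_union_Ioi_eq_Ioi hx.le,
      setIntegral_union (Set.Ioc_disjoint_Ioi le_rfl) measurableSet_Ioi
        ((hiB x₀).mono_set Set.Ioc_subset_Ioi_self) (hiB x₁)]
    have : ∫ y in Set.Ioc x₀ x₁, Real.exp (-y) * f y = 0 := by
      rw [integral_Ioc_eq_integral_Ioo]
      rw [setIntegral_congr_fun measurableSet_Ioo (g := fun _ => (0:ℝ))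
        (fun y hy => by rw [hvanish y hy, mul_zero])]
      simp
    rw [this, zero_add]
  -- rewrite hF
  rw [Fconv_eq f hc hi x₀, Fconv_eq f hc hi x₁, hA1, hB0] at hF
  have hkey : Real.exp (-x₀) * A - Real.exp x₀ * B
      = Real.exp (-x₁) * A - Real.exp x₁ * B := by
    have h2 : (-(1/2) : ℝ) ≠ 0 := by norm_num
    exact mul_left_cancel₀ h2 hF
  -- nonnegativity of A and B
  have hAnn : 0 ≤ A :=
    setIntegral_nonneg measurableSet_Iio fun y _ => mul_nonneg (Real.exp_pos y).le (hnn y)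
  have hBnn : 0 ≤ B :=
    setIntegral_nonneg measurableSet_Ioi fun y _ => mul_nonneg (Real.exp_pos (-y)).le (hnn y)
  have hc1 : Real.exp (-x₁) < Real.exp (-x₀) := Real.exp_lt_exp.2 (by linarith)
  have hc2 : Real.exp x₀ < Real.exp x₁ := Real.exp_lt_exp.2 hx
  have hA0 : A = 0 := by nlinarith
  have hB0' : B = 0 := by nlinarith
  -- deduce f = 0 a.e. on Iio x₀ and Ioi x₁
  have haeA : ∀ᵐ y : ℝ, y ∈ Set.Iio x₀ → f y = 0 := by
    have h := (setIntegral_eq_zero_iff_of_nonneg_ae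
      (Filter.Eventually.of_forall fun y => mul_nonneg (Real.exp_pos y).le (hnn y))
      (hiA x₀)).1 hA0
    rw [EventuallyEq, ae_restrict_iff' measurableSet_Iio] at h
    filter_upwards [h] with y hy hy'
    have := hy hy'
    simp only [Pi.zero_apply] at this
    exact (mul_eq_zero.1 this).resolve_left (Real.exp_ne_zero y)
  have haeB : ∀ᵐ y : ℝ, y ∈ Set.Ioi x₁ → f y = 0 := by
    have h := (setIntegral_eq_zero_iff_of_nonneg_ae
      (Filter.Eventually.of_forall fun y => mul_nonneg (Real.exp_pos (-y)).le (hnn y))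
      (hiB x₁)).1 hB0'
    rw [EventuallyEq, ae_restrict_iff' measurableSet_Ioi] at h
    filter_upwards [h] with y hy hy'
    have := hy hy'
    simp only [Pi.zero_apply] at this
    exact (mul_eq_zero.1 this).resolve_left (Real.exp_ne_zero (-y))
  -- f = 0 a.e., hence everywhere by continuity
  have hne0 : ∀ᵐ y : ℝ, y ≠ x₀ := by
    rw [ae_iff]
    simpa [not_not] using measure_singleton (μ := (volume : Measure ℝ)) x₀
  have hne1 : ∀ᵐ y : ℝ, y ≠ x₁ := by
    rw [ae_iff]
    simpa [not_not] using measure_singleton (μ := (volume : Measure ℝ)) x₁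
  have hae : f =ᵐ[volume] (fun _ => (0:ℝ)) := by
    filter_upwards [haeA, haeB, hne0, hne1] with y h1 h2 h3 h4
    rcases lt_trichotomy y x₀ with h | h | h
    · exact h1 h
    · exact absurd h h3
    · rcases lt_trichotomy y x₁ with h' | h' | h'
      · exact hvanish y ⟨h, h'⟩
      · exact absurd h' h4
      · exact h2 h'
  have := (Continuous.ae_eq_iff_eq volume hc continuous_zero).1 hae
  intro x
  exact congrFun this x
end

section
/- Let n be an odd positive integer and let u be a classical solution of (CH_n) on [0,T). Suppose there exist t* ∈ (0,T) and real numbers a < b such that F_{t*}(a) = F_{t*}(b) and f_{t*} vanishes identically on (a,b). Then f_{t*} is identically zero on ℝ (equivalently, u(t*,·) ≡ 0). -/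
open Real MeasureTheory Filter Topology
open scoped ENNReal

lemma hasDerivAt_integral_Iic_s12 {h : ℝ → ℝ} (hc : Continuous h)
    (hi : ∀ x : ℝ, IntegrableOn h (Set.Iic x)) (x : ℝ) :
    HasDerivAt (fun z => ∫ y in Set.Iic z, h y) (h x) x := by
  have key : (fun z => ∫ y in Set.Iic z, h y)
      = fun z => (∫ y in Set.Iic 0, h y) + ∫ y in (0:ℝ)..z, h y := by
    funext z
    rw [← intervalIntegral.integral_Iic_sub_Iic (hi 0) (hi z)]
    ring
  rw [key]
  exact ((hc.integral_hasStrictDerivAt 0 x).hasDerivAt).const_add _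

lemma expMulIntegrableOn_Iic {f : ℝ → ℝ} (cf : Continuous f) (h0 : ∀ y, 0 ≤ f y)
    (hInt : Integrable f) (x : ℝ) :
    IntegrableOn (fun y => Real.exp y * f y) (Set.Iic x) := by
  apply Integrable.mono' ((hInt.const_mul (Real.exp x)).integrableOn)
    ((Real.continuous_exp.mul cf).aestronglyMeasurable.restrict)
  filter_upwards [ae_restrict_mem measurableSet_Iic] with y hy
  rw [Real.norm_eq_abs, Pi.mul_apply, abs_mul, abs_of_nonneg (Real.exp_pos y).le, abs_of_nonneg (h0 y)]
  exact mul_le_mul_of_nonneg_right (Real.exp_le_exp.mpr hy) (h0 y)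

lemma expMulIntegrableOn_Ioi {f : ℝ → ℝ} (cf : Continuous f) (h0 : ∀ y, 0 ≤ f y)
    (hInt : Integrable f) (x : ℝ) :
    IntegrableOn (fun y => Real.exp (-y) * f y) (Set.Ioi x) := by
  apply Integrable.mono' ((hInt.const_mul (Real.exp (-x))).integrableOn)
    (((Real.continuous_exp.comp continuous_neg).mul cf).aestronglyMeasurable.restrict)
  filter_upwards [ae_restrict_mem measurableSet_Ioi] with y hy
  simp only [Pi.mul_apply, Function.comp_apply]
  rw [Real.norm_eq_abs, abs_mul, abs_of_nonneg (Real.exp_pos (-y)).le, abs_of_nonneg (h0 y)]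
  exact mul_le_mul_of_nonneg_right (Real.exp_le_exp.mpr (by linarith [le_of_lt (show x < y from hy)])) (h0 y)

/-- If `n` is odd, `F_{t*}(a) = F_{t*}(b)` for some `a < b`, and `f_{t*}`
vanishes on `(a,b)` for some `t* ∈ (0,T)`, then `f_{t*} ≡ 0` (equivalently `u(t*,·) ≡ 0`). -/
theorem vanishing_on_interval_implies_trivial
    (n : ℕ) (hn : 0 < n) (hodd : Odd n) (T : ℝ≥0∞) (hT : 0 < T) (u : ℝ → ℝ → ℝ)
    (hu : IsClassicalSolution n T u)
    (tstar : ℝ) (htstar : 0 < tstar) (htstarT : ENNReal.ofReal tstar < T)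
    (a b : ℝ) (hab : a < b)
    (hF : FLoc n u tstar a = FLoc n u tstar b)
    (hf : ∀ x ∈ Set.Ioo a b, fLoc n u tstar x = 0) :
    (∀ x : ℝ, fLoc n u tstar x = 0) ∧ (∀ x : ℝ, u tstar x = 0) := by
  have hmem : tstar ∈ timeDomain T := ⟨htstar.le, htstarT⟩
  set f : ℝ → ℝ := fLoc n u tstar with hfdef
  have hnR : (0:ℝ) < n := by exact_mod_cast hn
  have hC3 := hu.contDiff_x tstar hmem
  have cu : Continuous (u tstar) := hC3.continuous
  have cux : Continuous (ux u tstar) := by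
    have : Continuous (deriv (u tstar)) := hC3.continuous_deriv (by norm_num)
    exact this
  -- continuity of f
  have cf : Continuous f := by
    rw [hfdef]
    unfold fLoc
    exact ((continuous_const.mul (cu.pow _)).mul (cux.pow 2)).add
      (continuous_const.mul (cu.pow _))
  -- nonnegativity of f
  have hev1 : Even (n - 1) := Nat.Odd.sub_odd hodd odd_one
  have hev2 : Even (n + 1) := Odd.add_one hodd
  have hcpos : 0 < (n : ℝ) * ((n : ℝ) + 3) / (2 * ((n : ℝ) + 1)) := by positivity
  have hf0 : ∀ x, 0 ≤ f x := by
    intro x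
    rw [hfdef]
    unfold fLoc
    have h1 : 0 ≤ u tstar x ^ (n - 1) := hev1.pow_nonneg _
    have h2 : 0 ≤ u tstar x ^ (n + 1) := hev2.pow_nonneg _
    have h3 : 0 ≤ ux u tstar x ^ 2 := sq_nonneg _
    have := mul_nonneg (mul_nonneg (by positivity : (0:ℝ) ≤ (n:ℝ)/2) h1) h3
    nlinarith [mul_nonneg hcpos.le h2]
  -- integrability of f
  obtain ⟨⟨C, hC⟩, hInt_u, hInt_u2, _⟩ := hu.decay_u tstar hmem
  obtain ⟨_, _, hInt_ux2, _⟩ := hu.decay_ux tstar hmem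
  have hCnn : 0 ≤ C := le_trans (abs_nonneg _) (hC 0)
  have hbdd : ∀ k : ℕ, ∀ x : ℝ, ‖u tstar x ^ k‖ ≤ C ^ k := by
    intro k x
    rw [norm_pow]
    exact pow_le_pow_left₀ (norm_nonneg _) (by simpa [Real.norm_eq_abs] using hC x) k
  have hInt_f : Integrable f := by
    have h1 : Integrable (fun x => ((n:ℝ)/2 * u tstar x ^ (n-1)) * (ux u tstar x ^ 2)) := by
      apply hInt_ux2.bdd_mul (c := (n:ℝ)/2 * C ^ (n-1)) ((continuous_const.mul (cu.pow _)).aestronglyMeasurable)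
      refine Filter.Eventually.of_forall (fun x => ?_)
      simp only [Pi.mul_apply, Pi.pow_apply, norm_mul]
      have := hbdd (n-1) x
      have h05 : ‖(n:ℝ)/2‖ = (n:ℝ)/2 := by
        rw [Real.norm_eq_abs, abs_of_nonneg (by positivity)]
      rw [h05]
      exact mul_le_mul_of_nonneg_left this (by positivity)
    have h2 : Integrable (fun x =>
        (((n:ℝ) * ((n:ℝ)+3) / (2 * ((n:ℝ)+1))) * u tstar x ^ (n-1)) * (u tstar x ^ 2)) := by
      apply hInt_u2.bdd_mul (c := ((n:ℝ) * ((n:ℝ)+3) / (2 * ((n:ℝ)+1))) * C ^ (n-1)) ((continuous_const.mul (cu.pow _)).aestronglyMeasurable)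
      refine Filter.Eventually.of_forall (fun x => ?_)
      simp only [Pi.mul_apply, Pi.pow_apply, norm_mul]
      have := hbdd (n-1) x
      have h05 : ‖(n:ℝ) * ((n:ℝ)+3) / (2 * ((n:ℝ)+1))‖ = (n:ℝ) * ((n:ℝ)+3) / (2 * ((n:ℝ)+1)) := by
        rw [Real.norm_eq_abs, abs_of_nonneg hcpos.le]
      rw [h05]
      exact mul_le_mul_of_nonneg_left this hcpos.le
    have heqf : f = fun x => ((n:ℝ)/2 * u tstar x ^ (n-1)) * (ux u tstar x ^ 2)
        + (((n:ℝ) * ((n:ℝ)+3) / (2 * ((n:ℝ)+1))) * u tstar x ^ (n-1)) * (u tstar x ^ 2) := by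
      funext x
      rw [hfdef]
      unfold fLoc
      rw [show n + 1 = (n - 1) + 2 by omega, pow_add]
      ring
    rw [heqf]
    exact h1.add h2
  -- the weighted integrals
  have hI1 : ∀ x : ℝ, IntegrableOn (fun y => Real.exp y * f y) (Set.Iic x) :=
    expMulIntegrableOn_Iic cf hf0 hInt_f
  have hI2 : ∀ x : ℝ, IntegrableOn (fun y => Real.exp (-y) * f y) (Set.Ioi x) :=
    expMulIntegrableOn_Ioi cf hf0 hInt_f
  have cg : Continuous g := by
    unfold g
    exact (Real.continuous_exp.comp continuous_abs.neg).div_const 2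
  -- integrability of the convolution integrand
  have hg_int : ∀ x : ℝ, Integrable (fun y => g (x - y) * f y) := by
    intro x
    apply Integrable.mono' (hInt_f.const_mul (1/2 : ℝ))
      ((cg.comp (continuous_const.sub continuous_id)).mul cf).aestronglyMeasurable
    filter_upwards with y
    simp only [Pi.mul_apply, Function.comp_apply, Pi.sub_apply, id_eq]
    rw [Real.norm_eq_abs, abs_mul, abs_of_nonneg (hf0 y)]
    have hgle : |g (x - y)| ≤ 1/2 := by
      unfold g
      rw [abs_of_nonneg (by positivity)]
      have : Real.exp (-|x - y|) ≤ 1 := Real.exp_le_one_iff.mpr (neg_nonpos.mpr (abs_nonneg _))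
      linarith
    exact mul_le_mul_of_nonneg_right hgle (hf0 y)
  -- splitting the convolution
  have hsplit : ∀ x : ℝ, (∫ y : ℝ, g (x - y) * f y)
      = (Real.exp (-x) * (∫ y in Set.Iic x, Real.exp y * f y)
        + Real.exp x * (∫ y in Set.Ioi x, Real.exp (-y) * f y)) / 2 := by
    intro x
    rw [← intervalIntegral.integral_Iic_add_Ioi (b := x) ((hg_int x).integrableOn) ((hg_int x).integrableOn)]
    have e1 : (∫ y in Set.Iic x, g (x - y) * f y)
        = ∫ y in Set.Iic x, Real.exp (-x) / 2 * (Real.exp y * f y) := by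
      apply setIntegral_congr_fun measurableSet_Iic
      intro y hy
      unfold g
      show Real.exp (-|x - y|) / 2 * f y = Real.exp (-x) / 2 * (Real.exp y * f y)
      rw [abs_of_nonneg (sub_nonneg.mpr (Set.mem_Iic.mp hy)), neg_sub, Real.exp_sub,
        Real.exp_neg]
      ring
    have e2 : (∫ y in Set.Ioi x, g (x - y) * f y)
        = ∫ y in Set.Ioi x, Real.exp x / 2 * (Real.exp (-y) * f y) := by
      apply setIntegral_congr_fun measurableSet_Ioi
      intro y hy
      unfold g
      show Real.exp (-|x - y|) / 2 * f y = Real.exp x / 2 * (Real.exp (-y) * f y)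
      rw [abs_of_nonpos (sub_nonpos.mpr (le_of_lt (Set.mem_Ioi.mp hy))), neg_neg, Real.exp_sub,
        Real.exp_neg]
      ring
    rw [e1, e2, integral_const_mul, integral_const_mul]
    ring
  -- transfer to f ∘ neg for the Ioi integral
  have hInt_fneg : Integrable (fun y => f (-y)) := by
    have := (Measure.measurePreserving_neg (volume : Measure ℝ)).integrable_comp_emb
      (Homeomorph.neg ℝ).measurableEmbedding (g := f)
    exact this.mpr hInt_f
  have cf_neg : Continuous (fun y => f (-y)) := cf.comp continuous_neg
  have hf0_neg : ∀ y, 0 ≤ f (-y) := fun y => hf0 (-y)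
  have hI1n : ∀ x : ℝ, IntegrableOn (fun y => Real.exp y * f (-y)) (Set.Iic x) :=
    expMulIntegrableOn_Iic cf_neg hf0_neg hInt_fneg
  have hI2eq : ∀ z : ℝ, (∫ y in Set.Ioi z, Real.exp (-y) * f y)
      = ∫ y in Set.Iic (-z), Real.exp y * f (-y) := by
    intro z
    have := integral_comp_neg_Iic (-z) (fun y => Real.exp (-y) * f y)
    simpa using this.symm
  -- derivative of the Ioi integral
  have hI2d : ∀ x : ℝ, HasDerivAt (fun z => ∫ y in Set.Ioi z, Real.exp (-y) * f y)
      (-(Real.exp (-x) * f x)) x := by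
    intro x
    have houter := hasDerivAt_integral_Iic_s12
      (Real.continuous_exp.mul cf_neg) hI1n (-x)
    have h := houter.comp x (hasDerivAt_neg x)
    have hfun : (fun z => ∫ y in Set.Ioi z, Real.exp (-y) * f y)
        = (fun w => ∫ y in Set.Iic w, Real.exp y * f (-y)) ∘ (fun z : ℝ => -z) := by
      funext z
      exact hI2eq z
    rw [hfun]
    refine h.congr_deriv ?_
    simp
  have hI1d : ∀ x : ℝ, HasDerivAt (fun z => ∫ y in Set.Iic z, Real.exp y * f y)
      (Real.exp x * f x) x :=
    hasDerivAt_integral_Iic_s12 (Real.continuous_exp.mul cf) hI1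
  -- value of FLoc
  have hFval : ∀ x : ℝ, FLoc n u tstar x
      = (-(Real.exp (-x)) * (∫ y in Set.Iic x, Real.exp y * f y)
        + Real.exp x * (∫ y in Set.Ioi x, Real.exp (-y) * f y)) / 2 := by
    intro x
    have hD : HasDerivAt (fun z => ∫ y : ℝ, g (z - y) * f y)
        ((-(Real.exp (-x)) * (∫ y in Set.Iic x, Real.exp y * f y)
          + Real.exp x * (∫ y in Set.Ioi x, Real.exp (-y) * f y)) / 2) x := by
      have hfun : (fun z => ∫ y : ℝ, g (z - y) * f y)
          = fun z => (Real.exp (-z) * (∫ y in Set.Iic z, Real.exp y * f y)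
            + Real.exp z * (∫ y in Set.Ioi z, Real.exp (-y) * f y)) / 2 := funext hsplit
      rw [hfun]
      have d1 : HasDerivAt (fun z : ℝ => Real.exp (-z)) (-(Real.exp (-x))) x := by
        have := (Real.hasDerivAt_exp (-x)).comp x (hasDerivAt_neg x)
        exact this.congr_deriv (by simp)
      have d2 := Real.hasDerivAt_exp x
      have hcomb := ((d1.mul (hI1d x)).add (d2.mul (hI2d x))).div_const 2
      refine hcomb.congr_deriv ?_
      have hx : Real.exp (-x) * Real.exp x = 1 := by
        rw [← Real.exp_add]; simp
      ring
    have : FLoc n u tstar x = deriv (fun z => ∫ y : ℝ, g (z - y) * f y) x := by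
      simp only [FLoc, hfdef]
    rw [this, hD.deriv]
  -- the integrals agree at a and b since f vanishes on (a,b)
  have h1ab : (∫ y in Set.Iic b, Real.exp y * f y) = ∫ y in Set.Iic a, Real.exp y * f y := by
    have hsub := intervalIntegral.integral_Iic_sub_Iic (hI1 a) (hI1 b)
    have hz : (∫ y in a..b, Real.exp y * f y) = 0 := by
      rw [intervalIntegral.integral_of_le hab.le, integral_Ioc_eq_integral_Ioo]
      rw [setIntegral_congr_fun measurableSet_Ioo
        (fun y hy => by simp [hf y hy] : Set.EqOn (fun y => Real.exp y * f y) 0 (Set.Ioo a b))]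
      simp
    linarith
  have h2ab : (∫ y in Set.Ioi a, Real.exp (-y) * f y) = ∫ y in Set.Ioi b, Real.exp (-y) * f y := by
    rw [hI2eq a, hI2eq b]
    have hsub := intervalIntegral.integral_Iic_sub_Iic (hI1n (-b)) (hI1n (-a))
    have hz : (∫ y in (-b)..(-a), Real.exp y * f (-y)) = 0 := by
      rw [intervalIntegral.integral_of_le (by linarith), integral_Ioc_eq_integral_Ioo]
      rw [setIntegral_congr_fun measurableSet_Ioo
        (fun y hy => by
          have : -y ∈ Set.Ioo a b := ⟨by linarith [hy.2], by linarith [hy.1]⟩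
          simp [hf (-y) this] : Set.EqOn (fun y => Real.exp y * f (-y)) 0 (Set.Ioo (-b) (-a)))]
      simp
    linarith
  set A := ∫ y in Set.Iic a, Real.exp y * f y with hA_def
  set B := ∫ y in Set.Ioi b, Real.exp (-y) * f y with hB_def
  have hAnn : 0 ≤ A :=
    setIntegral_nonneg measurableSet_Iic (fun y _ => mul_nonneg (Real.exp_pos y).le (hf0 y))
  have hBnn : 0 ≤ B :=
    setIntegral_nonneg measurableSet_Ioi (fun y _ => mul_nonneg (Real.exp_pos (-y)).le (hf0 y))
  have heq : -(Real.exp (-a)) * A + Real.exp a * B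
      = -(Real.exp (-b)) * A + Real.exp b * B := by
    have hFa := hFval a
    have hFb := hFval b
    rw [h2ab] at hFa
    rw [h1ab] at hFb
    rw [hFa, hFb] at hF
    linarith
  have e1 : Real.exp (-b) < Real.exp (-a) := Real.exp_lt_exp.mpr (by linarith)
  have e2 : Real.exp a < Real.exp b := Real.exp_lt_exp.mpr hab
  have hA0 : A = 0 := by
    by_contra h
    have hA' : 0 < A := lt_of_le_of_ne hAnn (Ne.symm h)
    nlinarith [mul_pos (sub_pos.mpr e1) hA', mul_nonneg hBnn (sub_pos.mpr e2).le]
  have hB0 : B = 0 := by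
    by_contra h
    have hB' : 0 < B := lt_of_le_of_ne hBnn (Ne.symm h)
    nlinarith [mul_pos (sub_pos.mpr e2) hB', mul_nonneg hAnn (sub_pos.mpr e1).le]
  -- deduce f = 0 a.e. on the two tails
  have hae1 : ∀ᵐ y : ℝ, y ∈ Set.Iic a → f y = 0 := by
    have hnn : 0 ≤ᵐ[Measure.restrict volume (Set.Iic a)] fun y => Real.exp y * f y :=
      Filter.Eventually.of_forall (fun y => mul_nonneg (Real.exp_pos y).le (hf0 y))
    have h0 := (integral_eq_zero_iff_of_nonneg_ae hnn (hI1 a)).mp hA0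
    rw [← ae_restrict_iff' measurableSet_Iic]
    filter_upwards [h0] with y hy
    have := Real.exp_ne_zero y
    simpa [this] using hy
  have hae2 : ∀ᵐ y : ℝ, y ∈ Set.Ioi b → f y = 0 := by
    have hnn : 0 ≤ᵐ[Measure.restrict volume (Set.Ioi b)] fun y => Real.exp (-y) * f y :=
      Filter.Eventually.of_forall (fun y => mul_nonneg (Real.exp_pos (-y)).le (hf0 y))
    have h0 := (integral_eq_zero_iff_of_nonneg_ae hnn (hI2 b)).mp hB0
    rw [← ae_restrict_iff' measurableSet_Ioi]
    filter_upwards [h0] with y hy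
    have := Real.exp_ne_zero (-y)
    simpa [this] using hy
  -- f = 0 on [a,b] by continuity
  have hIcc : ∀ y ∈ Set.Icc a b, f y = 0 := by
    intro y hy
    rcases eq_or_lt_of_le hy.1 with h | h
    · rw [← h]
      have hb1 : Filter.Tendsto f (nhdsWithin a (Set.Ioi a)) (nhds (f a)) :=
        (cf.tendsto a).mono_left nhdsWithin_le_nhds
      have hb2 : Filter.Tendsto f (nhdsWithin a (Set.Ioi a)) (nhds 0) := by
        apply Filter.Tendsto.congr' _ tendsto_const_nhds
        filter_upwards [Ioo_mem_nhdsGT_of_mem ⟨le_refl a, hab⟩] with z hz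
        exact (hf z hz).symm
      exact tendsto_nhds_unique hb1 hb2
    rcases eq_or_lt_of_le hy.2 with h' | h'
    · rw [h']
      have hb1 : Filter.Tendsto f (nhdsWithin b (Set.Iio b)) (nhds (f b)) :=
        (cf.tendsto b).mono_left nhdsWithin_le_nhds
      have hb2 : Filter.Tendsto f (nhdsWithin b (Set.Iio b)) (nhds 0) := by
        apply Filter.Tendsto.congr' _ tendsto_const_nhds
        filter_upwards [Ioo_mem_nhdsLT_of_mem ⟨hab, le_refl b⟩] with z hz
        exact (hf z hz).symm
      exact tendsto_nhds_unique hb1 hb2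
    · exact hf y ⟨h, h'⟩
  -- f ≡ 0
  have hfall : ∀ x : ℝ, f x = 0 := by
    have hae : f =ᵐ[volume] (fun _ => (0:ℝ)) := by
      filter_upwards [hae1, hae2] with x h1 h2
      rcases le_total x a with h | h
      · exact h1 h
      rcases le_total x b with h' | h'
      · exact hIcc x ⟨h, h'⟩
      · rcases eq_or_lt_of_le h' with h'' | h''
        · exact hIcc x ⟨h, h''.ge⟩
        · exact h2 h''
    have := (cf.ae_eq_iff_eq volume continuous_const).mp hae
    exact fun x => congrFun this x
  refine ⟨hfall, fun x => ?_⟩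
  have h := hfall x
  rw [hfdef] at h
  unfold fLoc at h
  have h1 : 0 ≤ ((n:ℝ)/2) * u tstar x ^ (n-1) * ux u tstar x ^ 2 :=
    mul_nonneg (mul_nonneg (by positivity) (hev1.pow_nonneg _)) (sq_nonneg _)
  have h2 : 0 ≤ u tstar x ^ (n + 1) := hev2.pow_nonneg _
  have hterm : ((n:ℝ) * ((n:ℝ) + 3) / (2 * ((n:ℝ) + 1))) * u tstar x ^ (n + 1) = 0 := by
    linarith [h1, mul_nonneg hcpos.le h2]
  have hz : u tstar x ^ (n + 1) = 0 := by
    rcases mul_eq_zero.mp hterm with h' | h'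
    · exact absurd h' hcpos.ne'
    · exact h'
  exact pow_eq_zero_iff (Nat.succ_ne_zero n) |>.mp hz
end

section
/- Let θ ∈ (0,1). For each positive integer N define φ_N : ℝ → ℝ by φ_N(x) = 1 for x ≤ 0, φ_N(x) = e^{θx} for 0 < x < N, and φ_N(x) = e^{θN} for x ≥ N. Then there exists a constant c₀ > 0, depending only on θ, such that for every positive integer N and every x ∈ ℝ: φ_N(x) ∫_ℝ e^{−|x−y|} / φ_N(y) dy ≤ c₀. -/
open Real MeasureTheory Filter Topology

/-- The cutoff weight `φ_N`. -/
noncomputable def phiN (θ : ℝ) (N : ℕ) (x : ℝ) : ℝ :=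
  if x ≤ 0 then 1 else if x < N then Real.exp (θ * x) else Real.exp (θ * N)

lemma phiN_eq (θ : ℝ) (N : ℕ) (x : ℝ) :
    phiN θ N x = Real.exp (θ * min (max x 0) (N : ℝ)) := by
  unfold phiN
  split_ifs with h1 h2
  · rw [max_eq_right h1, min_eq_left (by positivity), mul_zero, Real.exp_zero]
  · rw [max_eq_left (le_of_lt (lt_of_not_ge h1)), min_eq_left h2.le]
  · rw [max_eq_left (le_of_lt (lt_of_not_ge h1)), min_eq_right (le_of_not_gt h2)]

lemma phiN_pos (θ : ℝ) (N : ℕ) (x : ℝ) : 0 < phiN θ N x := by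
  rw [phiN_eq]; exact Real.exp_pos _

lemma phiN_ratio (θ : ℝ) (hθ : 0 < θ) (N : ℕ) (x y : ℝ) :
    phiN θ N x ≤ Real.exp (θ * |x - y|) * phiN θ N y := by
  rw [phiN_eq, phiN_eq, ← Real.exp_add, Real.exp_le_exp]
  have h1 : |min (max x 0) (N : ℝ) - min (max y 0) (N : ℝ)| ≤ |x - y| := by
    calc |min (max x 0) (N : ℝ) - min (max y 0) (N : ℝ)|
        ≤ max |max x 0 - max y 0| |(N : ℝ) - N| := abs_min_sub_min_le_max _ _ _ _
      _ ≤ |x - y| := by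
          rw [sub_self, abs_zero]
          exact max_le (abs_max_sub_max_le_abs _ _ _) (abs_nonneg _)
  have h2 : min (max x 0) (N : ℝ) - min (max y 0) (N : ℝ) ≤ |x - y| :=
    (le_abs_self _).trans h1
  nlinarith

/-- There is a constant `c₀ > 0` depending only on `θ ∈ (0,1)` such that
`φ_N(x) ∫ e^{-|x-y|}/φ_N(y) dy ≤ c₀` for every `N` and every `x`. -/
theorem cutoff_weight_uniform_bound (θ : ℝ) (hθ : θ ∈ Set.Ioo (0 : ℝ) 1) :
    ∃ c₀ : ℝ, 0 < c₀ ∧ ∀ N : ℕ, 0 < N → ∀ x : ℝ,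
      phiN θ N x * (∫ y : ℝ, Real.exp (-|x - y|) / phiN θ N y) ≤ c₀ := by
  obtain ⟨hθ0, hθ1⟩ := hθ
  set a : ℝ := 1 - θ with ha
  have ha0 : 0 < a := by linarith
  set g : ℝ → ℝ := fun t => Real.exp (-(a * |t|)) with hg
  have hgint : Integrable g := by
    have h1 : IntegrableOn g (Set.Ioi (0 : ℝ)) := by
      refine (exp_neg_integrableOn_Ioi 0 ha0).congr_fun (fun y hy => ?_) measurableSet_Ioi
      simp [hg, abs_of_pos (Set.mem_Ioi.mp hy)]
    have h2 : IntegrableOn g (Set.Iic (0 : ℝ)) := by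
      rw [← Measure.map_neg_eq_self (volume : Measure ℝ)]
      have m : MeasurableEmbedding fun x : ℝ => -x :=
        (Homeomorph.neg ℝ).measurableEmbedding
      rw [m.integrableOn_map_iff]
      simp_rw [Function.comp_def, hg, abs_neg, Set.neg_preimage, Set.neg_Iic, neg_zero]
      exact Iff.mpr integrableOn_Ici_iff_integrableOn_Ioi h1
    rw [← integrableOn_univ, ← Set.Iic_union_Ioi (a := (0 : ℝ))]
    exact h2.union h1
  have hgpos : ∀ t, 0 < g t := fun t => Real.exp_pos _
  set c₀ : ℝ := ∫ t, g t with hc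
  have hc0 : 0 < c₀ := by
    rw [hc]
    refine (integral_pos_iff_support_of_nonneg (fun t => (hgpos t).le) hgint).mpr ?_
    have : Function.support g = Set.univ := by
      ext t; simp [Function.mem_support, (hgpos t).ne']
    rw [this]
    simp
  refine ⟨c₀, hc0, fun N _ x => ?_⟩
  have hφx := phiN_pos θ N x
  have key : ∀ y : ℝ, Real.exp (-|x - y|) / phiN θ N y ≤ g (x - y) / phiN θ N x := by
    intro y
    rw [div_le_div_iff₀ (phiN_pos θ N y) hφx]
    calc Real.exp (-|x - y|) * phiN θ N x
        ≤ Real.exp (-|x - y|) * (Real.exp (θ * |x - y|) * phiN θ N y) := by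
          exact mul_le_mul_of_nonneg_left (phiN_ratio θ hθ0 N x y) (Real.exp_pos _).le
      _ = g (x - y) * phiN θ N y := by
          rw [← mul_assoc, ← Real.exp_add, hg, ha]
          ring_nf
  have hint2 : Integrable (fun y => g (x - y) / phiN θ N x) :=
    (hgint.comp_sub_left x).div_const _
  have hmono : (∫ y : ℝ, Real.exp (-|x - y|) / phiN θ N y)
      ≤ ∫ y : ℝ, g (x - y) / phiN θ N x := by
    refine integral_mono_of_nonneg (Filter.Eventually.of_forall fun y => ?_) hint2
      (Filter.Eventually.of_forall key)
    exact div_nonneg (Real.exp_pos _).le (phiN_pos θ N y).le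
  have heq : (∫ y : ℝ, g (x - y) / phiN θ N x) = c₀ / phiN θ N x := by
    rw [integral_div, hc, integral_sub_left_eq_self g volume x]
  calc phiN θ N x * (∫ y : ℝ, Real.exp (-|x - y|) / phiN θ N y)
      ≤ phiN θ N x * (c₀ / phiN θ N x) := by
        rw [← heq]; exact mul_le_mul_of_nonneg_left hmono hφx.le
    _ = c₀ := by field_simp
end
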